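/- Fix an integer k ≥ 2. For every n ≥ 0, R_{n+1}^{(k≤max,∅,0,0)}(x) = Σ_{i=1}^{n+1} (n+1−i)! · C(n, i−1) · R_{i−1}^{(k−1,∅,0,0)}(x), where R_0^{(k−1,∅,0,0)}(x) = 1 and C(n, i−1) is the binomial coefficient. -/

import Mathlib

/-- Number of points in quadrant I relative to `(i, σ i)`. -/
def quad1 {n : ℕ} (σ : Equiv.Perm (Fin n)) (i : Fin n) : ℕ :=
  (Finset.univ.filter (fun j => i < j ∧ σ i < σ j)).card

/-- Number of points in quadrant II relative to `(i, σ i)`. -/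
def quad2 {n : ℕ} (σ : Equiv.Perm (Fin n)) (i : Fin n) : ℕ :=
  (Finset.univ.filter (fun j => j < i ∧ σ i < σ j)).card

/-- `mmp^{(k,∅,0,0)}(σ)`: the number of indices `i` with at least `k` points
in quadrant I and exactly 0 points in quadrant II relative to `(i, σ i)`. -/
def mmpKE {n : ℕ} (k : ℕ) (σ : Equiv.Perm (Fin n)) : ℕ :=
  (Finset.univ.filter (fun i => k ≤ quad1 σ i ∧ quad2 σ i = 0)).card

/-- `R_n^{(k,∅,0,0)}(x) = Σ_{σ ∈ S_n} x^{mmp^{(k,∅,0,0)}(σ)}`. -/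
noncomputable def RKE (k n : ℕ) : Polynomial ℤ :=
  ∑ σ : Equiv.Perm (Fin n), Polynomial.X ^ mmpKE k σ

/-- `σ i` matches `MMP(k ≤ max, ∅, 0, 0)` in `σ`: none of the earlier entries
exceeds `σ i`, and, `σ m` being the maximum of the entries after position `i`,
at least `k` of the entries in positions `i+1, …, m` exceed `σ i`. -/
def kleMatch {n : ℕ} (k : ℕ) (σ : Equiv.Perm (Fin n)) (i : Fin n) : Prop :=
  (∀ j, j < i → σ j < σ i) ∧
  ∃ m, i < m ∧ (∀ j, i < j → σ j ≤ σ m) ∧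
    k ≤ (Finset.univ.filter (fun j => i < j ∧ j ≤ m ∧ σ i < σ j)).card

instance {n : ℕ} (k : ℕ) (σ : Equiv.Perm (Fin n)) (i : Fin n) :
    Decidable (kleMatch k σ i) := by
  unfold kleMatch; infer_instance

/-- `mmp^{(k ≤ max, ∅, 0, 0)}(σ)`. -/
def mmpKle {n : ℕ} (k : ℕ) (σ : Equiv.Perm (Fin n)) : ℕ :=
  (Finset.univ.filter (fun i => kleMatch k σ i)).card

/-- `R_n^{(k ≤ max, ∅, 0, 0)}(x) = Σ_{σ ∈ S_n} x^{mmp^{(k ≤ max,∅,0,0)}(σ)}`. -/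
noncomputable def RKle (k n : ℕ) : Polynomial ℤ :=
  ∑ σ : Equiv.Perm (Fin n), Polynomial.X ^ mmpKle k σ

open Finset Equiv

namespace MMPAux

def extPerm {m N : ℕ} (h : m ≤ N) (ρ : Equiv.Perm (Fin m)) : Equiv.Perm (Fin N) where
  toFun x := if hx : (x : ℕ) < m then Fin.castLE h (ρ ⟨x, hx⟩) else x
  invFun x := if hx : (x : ℕ) < m then Fin.castLE h (ρ.symm ⟨x, hx⟩) else x
  left_inv x := by
    dsimp only
    by_cases hx : (x : ℕ) < m
    · rw [dif_pos hx]
      have h2 : ((Fin.castLE h (ρ ⟨x, hx⟩)) : ℕ) < m := (ρ ⟨x, hx⟩).isLt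
      rw [dif_pos h2]
      have h3 : (⟨((Fin.castLE h (ρ ⟨x, hx⟩)) : ℕ), h2⟩ : Fin m) = ρ ⟨x, hx⟩ :=
        Fin.ext rfl
      rw [h3, Equiv.symm_apply_apply]
      exact Fin.ext rfl
    · rw [dif_neg hx, dif_neg hx]
  right_inv x := by
    dsimp only
    by_cases hx : (x : ℕ) < m
    · rw [dif_pos hx]
      have h2 : ((Fin.castLE h (ρ.symm ⟨x, hx⟩)) : ℕ) < m := (ρ.symm ⟨x, hx⟩).isLt
      rw [dif_pos h2]
      have h3 : (⟨((Fin.castLE h (ρ.symm ⟨x, hx⟩)) : ℕ), h2⟩ : Fin m) = ρ.symm ⟨x, hx⟩ :=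
        Fin.ext rfl
      rw [h3, Equiv.apply_symm_apply]
      exact Fin.ext rfl
    · rw [dif_neg hx, dif_neg hx]

lemma extPerm_castLE {m N : ℕ} (h : m ≤ N) (ρ : Equiv.Perm (Fin m)) (i : Fin m) :
    extPerm h ρ (Fin.castLE h i) = Fin.castLE h (ρ i) := by
  show (if hx : ((Fin.castLE h i : Fin N) : ℕ) < m then _ else _) = _
  rw [dif_pos (show ((Fin.castLE h i : Fin N) : ℕ) < m from i.isLt)]
  rfl

lemma extPerm_fix {m N : ℕ} (h : m ≤ N) (ρ : Equiv.Perm (Fin m)) (x : Fin N)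
    (hx : ¬ (x : ℕ) < m) : extPerm h ρ x = x := dif_neg hx

lemma extPerm_mul {m N : ℕ} (h : m ≤ N) (ρ₁ ρ₂ : Equiv.Perm (Fin m)) :
    extPerm h ρ₁ * extPerm h ρ₂ = extPerm h (ρ₁ * ρ₂) := by
  apply Equiv.ext
  intro x
  rw [Equiv.Perm.mul_apply]
  by_cases hx : (x : ℕ) < m
  · have h1 : extPerm h ρ₂ x = Fin.castLE h (ρ₂ ⟨x, hx⟩) := dif_pos hx
    rw [h1]
    have : (⟨((Fin.castLE h (ρ₂ ⟨x, hx⟩) : Fin N) : ℕ), (ρ₂ ⟨x, hx⟩).isLt⟩ : Fin m)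
        = ρ₂ ⟨x, hx⟩ := Fin.ext rfl
    rw [show extPerm h ρ₁ (Fin.castLE h (ρ₂ ⟨x, hx⟩)) = Fin.castLE h (ρ₁ (ρ₂ ⟨x, hx⟩))
      from extPerm_castLE h ρ₁ _]
    rw [show extPerm h (ρ₁ * ρ₂) x = Fin.castLE h ((ρ₁ * ρ₂) ⟨x, hx⟩) from dif_pos hx]
    rfl
  · rw [extPerm_fix h ρ₂ x hx, extPerm_fix h ρ₁ x hx, extPerm_fix h _ x hx]

lemma extPerm_one {m N : ℕ} (h : m ≤ N) : extPerm h (1 : Equiv.Perm (Fin m)) = 1 := by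
  apply Equiv.ext
  intro x
  by_cases hx : (x : ℕ) < m
  · rw [show extPerm h 1 x = Fin.castLE h ((1 : Equiv.Perm (Fin m)) ⟨x, hx⟩) from dif_pos hx]
    exact Fin.ext rfl
  · exact extPerm_fix h 1 x hx

def rk {m N : ℕ} (f : Fin m → Fin N) (i : Fin m) : ℕ :=
  (Finset.univ.filter fun j => f j < f i).card

lemma rk_lt {m N : ℕ} (f : Fin m → Fin N) (i : Fin m) : rk f i < m := by
  have hs : (Finset.univ.filter fun j => f j < f i) ⊆ Finset.univ.erase i := by
    intro j hj
    simp only [Finset.mem_filter] at hj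
    refine Finset.mem_erase.mpr ⟨?_, Finset.mem_univ _⟩
    rintro rfl
    exact lt_irrefl _ hj.2
  calc rk f i ≤ (Finset.univ.erase i).card := Finset.card_le_card hs
    _ < Finset.univ.card := Finset.card_erase_lt_of_mem (Finset.mem_univ i)
    _ = m := by simp

lemma rk_lt_rk {m N : ℕ} {f : Fin m → Fin N} {i j : Fin m} (h : f i < f j) :
    rk f i < rk f j := by
  apply Finset.card_lt_card
  rw [Finset.ssubset_iff_of_subset]
  · exact ⟨i, by simp [h], by simp⟩
  · intro x hx
    simp only [Finset.mem_filter, Finset.mem_univ, true_and] at hx ⊢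
    exact lt_trans hx h

lemma rk_lt_rk_iff {m N : ℕ} {f : Fin m → Fin N} (hf : Function.Injective f) {i j : Fin m} :
    rk f i < rk f j ↔ f i < f j := by
  constructor
  · intro h
    rcases lt_trichotomy (f i) (f j) with h'|h'|h'
    · exact h'
    · exact absurd (hf h' ▸ h) (lt_irrefl _)
    · exact absurd (lt_trans h (rk_lt_rk h')) (lt_irrefl _)
  · exact rk_lt_rk

noncomputable def patt {m N : ℕ} (f : Fin m → Fin N) (hf : Function.Injective f) : Equiv.Perm (Fin m) :=
  Equiv.ofBijective (fun i => ⟨rk f i, rk_lt f i⟩)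
    (Finite.injective_iff_bijective.mp (by
      intro i j hij
      have hr : rk f i = rk f j := congrArg Fin.val hij
      rcases lt_trichotomy (f i) (f j) with h|h|h
      · exact absurd hr (Nat.ne_of_lt (rk_lt_rk h))
      · exact hf h
      · exact absurd hr.symm (Nat.ne_of_lt (rk_lt_rk h))))

lemma patt_apply {m N : ℕ} (f : Fin m → Fin N) (hf : Function.Injective f) (i : Fin m) :
    patt f hf i = ⟨rk f i, rk_lt f i⟩ := rfl

lemma patt_lt_iff {m N : ℕ} (f : Fin m → Fin N) (hf : Function.Injective f) (i j : Fin m) :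
    patt f hf i < patt f hf j ↔ f i < f j := by
  rw [patt_apply, patt_apply, Fin.lt_def]
  exact rk_lt_rk_iff hf

lemma patt_congr {m N : ℕ} {f g : Fin m → Fin N} (h : f = g) (hf : Function.Injective f)
    (hg : Function.Injective g) : patt f hf = patt g hg := by subst h; rfl

lemma patt_comp {m N : ℕ} (f : Fin m → Fin N) (hf : Function.Injective f)
    (ρ : Equiv.Perm (Fin m)) (hg : Function.Injective (f ∘ ρ)) :
    patt (f ∘ ρ) hg = patt f hf * ρ := by
  apply Equiv.ext
  intro i
  rw [Equiv.Perm.mul_apply, patt_apply, patt_apply]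
  apply Fin.ext
  show rk (f ∘ ρ) i = rk f (ρ i)
  unfold rk
  apply Finset.card_bij (fun j _ => ρ j)
  · intro a ha
    simp only [Finset.mem_filter, Finset.mem_univ, true_and, Function.comp_apply] at ha ⊢
    exact ha
  · intro a _ b _ hab
    exact ρ.injective hab
  · intro b hb
    simp only [Finset.mem_filter, Finset.mem_univ, true_and, Function.comp_apply] at hb ⊢
    exact ⟨ρ.symm b, by simpa using hb, by simp⟩

section Main

variable {n : ℕ}

/-- the pattern of the first `q` entries of `σ`. -/
noncomputable def Pq (q : Fin (n+1)) (σ : Equiv.Perm (Fin (n+1))) : Equiv.Perm (Fin (q : ℕ)) :=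
  patt (fun i => σ (Fin.castLE q.isLt.le i))
    (σ.injective.comp (Fin.castLE_injective q.isLt.le))

lemma Pq_mul (q : Fin (n+1)) (σ : Equiv.Perm (Fin (n+1))) (ρ : Equiv.Perm (Fin (q : ℕ))) :
    Pq q (σ * extPerm q.isLt.le ρ) = Pq q σ * ρ := by
  unfold Pq
  have hfun : (fun i : Fin (q : ℕ) => (σ * extPerm q.isLt.le ρ) (Fin.castLE q.isLt.le i))
      = (fun i => σ (Fin.castLE q.isLt.le i)) ∘ ρ := by
    funext i
    simp only [Equiv.Perm.mul_apply, Function.comp_apply, extPerm_castLE]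
  rw [patt_congr hfun _ (((σ.injective.comp (Fin.castLE_injective q.isLt.le))).comp ρ.injective)]
  exact patt_comp _ _ ρ _

lemma extPerm_fix_q (q : Fin (n+1)) (ρ : Equiv.Perm (Fin (q : ℕ))) :
    extPerm q.isLt.le ρ q = q :=
  extPerm_fix _ _ _ (lt_irrefl _)

lemma card_top_fiber (q : Fin (n+1)) :
    (Finset.univ.filter fun σ : Equiv.Perm (Fin (n+1)) => σ q = Fin.last n).card
      = n.factorial := by
  have key : ∀ y : Fin (n+1),
      (Finset.univ.filter fun σ : Equiv.Perm (Fin (n+1)) => σ q = y).card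
        = (Finset.univ.filter fun σ : Equiv.Perm (Fin (n+1)) => σ q = Fin.last n).card := by
    intro y
    apply Finset.card_bij' (fun σ _ => Equiv.swap y (Fin.last n) * σ)
        (fun σ _ => Equiv.swap y (Fin.last n) * σ)
    · intro σ hσ
      simp only [Finset.mem_filter, Finset.mem_univ, true_and, Equiv.Perm.mul_apply] at hσ ⊢
      rw [hσ, Equiv.swap_apply_left]
    · intro σ hσ
      simp only [Finset.mem_filter, Finset.mem_univ, true_and, Equiv.Perm.mul_apply] at hσ ⊢
      rw [hσ, Equiv.swap_apply_right]
    · intro σ _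
      rw [← mul_assoc, Equiv.swap_mul_self, one_mul]
    · intro σ _
      rw [← mul_assoc, Equiv.swap_mul_self, one_mul]
  have total : ∑ y : Fin (n+1),
      (Finset.univ.filter fun σ : Equiv.Perm (Fin (n+1)) => σ q = y).card
        = (n+1).factorial := by
    rw [← Finset.card_eq_sum_card_fiberwise
      (f := fun σ : Equiv.Perm (Fin (n+1)) => σ q) (fun σ _ => Finset.mem_univ _)]
    simp [Fintype.card_perm]
  rw [Finset.sum_congr rfl (fun y _ => key y), Finset.sum_const, Finset.card_univ,
    Fintype.card_fin, smul_eq_mul, Nat.factorial_succ] at total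
  exact Nat.eq_of_mul_eq_mul_left (Nat.succ_pos n) total

lemma card_fiber_const (q : Fin (n+1)) (τ : Equiv.Perm (Fin (q : ℕ))) :
    (Finset.univ.filter fun σ : Equiv.Perm (Fin (n+1)) =>
        σ q = Fin.last n ∧ Pq q σ = τ).card
      = (Finset.univ.filter fun σ : Equiv.Perm (Fin (n+1)) =>
        σ q = Fin.last n ∧ Pq q σ = 1).card := by
  apply Finset.card_bij' (fun σ _ => σ * extPerm q.isLt.le τ⁻¹)
      (fun σ _ => σ * extPerm q.isLt.le τ)
  · intro σ hσ
    simp only [Finset.mem_filter, Finset.mem_univ, true_and] at hσ ⊢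
    refine ⟨?_, ?_⟩
    · rw [Equiv.Perm.mul_apply, extPerm_fix_q, hσ.1]
    · rw [Pq_mul, hσ.2, mul_inv_cancel]
  · intro σ hσ
    simp only [Finset.mem_filter, Finset.mem_univ, true_and] at hσ ⊢
    refine ⟨?_, ?_⟩
    · rw [Equiv.Perm.mul_apply, extPerm_fix_q, hσ.1]
    · rw [Pq_mul, hσ.2, one_mul]
  · intro σ _
    rw [mul_assoc, extPerm_mul, inv_mul_cancel, extPerm_one, mul_one]
  · intro σ _
    rw [mul_assoc, extPerm_mul, mul_inv_cancel, extPerm_one, mul_one]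

lemma card_fiber (q : Fin (n+1)) (τ : Equiv.Perm (Fin (q : ℕ))) :
    (Finset.univ.filter fun σ : Equiv.Perm (Fin (n+1)) =>
        σ q = Fin.last n ∧ Pq q σ = τ).card
      = Nat.choose n (q : ℕ) * Nat.factorial (n - (q : ℕ)) := by
  have hQ : (q : ℕ) ≤ n := Nat.lt_succ_iff.mp q.isLt
  have htot : Nat.factorial (q : ℕ) *
      (Finset.univ.filter fun σ : Equiv.Perm (Fin (n+1)) =>
        σ q = Fin.last n ∧ Pq q σ = 1).card = n.factorial := by
    rw [← card_top_fiber q]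
    have expand : (Finset.univ.filter fun σ : Equiv.Perm (Fin (n+1)) =>
        σ q = Fin.last n).card = ∑ τ' : Equiv.Perm (Fin (q : ℕ)),
          ((Finset.univ.filter fun σ : Equiv.Perm (Fin (n+1)) =>
            σ q = Fin.last n).filter fun σ => Pq q σ = τ').card :=
      Finset.card_eq_sum_card_fiberwise (fun σ _ => Finset.mem_univ _)
    rw [expand]
    have step : ∀ τ' : Equiv.Perm (Fin (q : ℕ)),
        ((Finset.univ.filter fun σ : Equiv.Perm (Fin (n+1)) =>
          σ q = Fin.last n).filter fun σ => Pq q σ = τ').card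
        = (Finset.univ.filter fun σ : Equiv.Perm (Fin (n+1)) =>
          σ q = Fin.last n ∧ Pq q σ = 1).card := fun τ' => by
      rw [Finset.filter_filter]
      exact card_fiber_const q τ'
    rw [Finset.sum_congr rfl (fun τ' _ => step τ')]
    rw [Finset.sum_const, Finset.card_univ, Fintype.card_perm, Fintype.card_fin, smul_eq_mul]
  have hcomb : Nat.factorial (q : ℕ) *
      (Nat.choose n (q : ℕ) * Nat.factorial (n - (q : ℕ))) = n.factorial := by
    have := Nat.choose_mul_factorial_mul_factorial hQ
    ring_nf
    ring_nf at this
    linarith [this]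
  have := card_fiber_const q τ
  rw [this]
  apply Nat.eq_of_mul_eq_mul_left (Nat.factorial_pos (q : ℕ))
  rw [htot, hcomb]


lemma castLE_mk_eq (q : Fin (n+1)) (i : Fin (n+1)) (hi : (i : ℕ) < (q : ℕ)) :
    Fin.castLE q.isLt.le ⟨(i : ℕ), hi⟩ = i := Fin.ext rfl

lemma kle_basic {k : ℕ} (hk : 2 ≤ k) {q : Fin (n+1)} {σ : Equiv.Perm (Fin (n+1))}
    (hσ : σ q = Fin.last n) (i : Fin (n+1)) :
    kleMatch k σ i ↔ i < q ∧ (∀ j, j < i → σ j < σ i) ∧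
      k - 1 ≤ (Finset.univ.filter fun j => i < j ∧ j < q ∧ σ i < σ j).card := by
  have hins : i < q → (Finset.univ.filter fun j => i < j ∧ j ≤ q ∧ σ i < σ j)
      = insert q (Finset.univ.filter fun j => i < j ∧ j < q ∧ σ i < σ j) := by
    intro hiq
    ext j
    simp only [Finset.mem_filter, Finset.mem_univ, true_and, Finset.mem_insert]
    constructor
    · rintro ⟨h1, h2, h3⟩
      rcases lt_or_eq_of_le h2 with h | h
      · exact Or.inr ⟨h1, h, h3⟩
      · exact Or.inl h
    · rintro (rfl | ⟨h1, h2, h3⟩)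
      · refine ⟨hiq, le_refl _, ?_⟩
        rw [hσ]
        exact lt_of_le_of_ne (Fin.le_last _)
          (fun h => (ne_of_lt hiq) (σ.injective (h.trans hσ.symm)))
      · exact ⟨h1, le_of_lt h2, h3⟩
  constructor
  · rintro ⟨h1, m, him, hmax, hcnt⟩
    have hine : i ≠ q := by
      rintro rfl
      have hempty : (Finset.univ.filter fun j => i < j ∧ j ≤ m ∧ σ i < σ j) = ∅ := by
        apply Finset.filter_eq_empty_iff.mpr
        intro j _
        rintro ⟨-, -, hlt⟩
        rw [hσ] at hlt
        exact absurd hlt (not_lt.mpr (Fin.le_last _))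
      rw [hempty, Finset.card_empty] at hcnt
      omega
    have hile : ¬ q < i := by
      intro h
      have h2 := h1 q h
      rw [hσ] at h2
      exact absurd h2 (not_lt.mpr (Fin.le_last _))
    have hiq : i < q := lt_of_le_of_ne (not_lt.mp hile) hine
    have hmq : m = q := by
      apply σ.injective
      have h2 : σ q ≤ σ m := hmax q hiq
      rw [hσ] at h2 ⊢
      exact le_antisymm (Fin.le_last _) h2
    rw [hmq, hins hiq, Finset.card_insert_of_notMem (by simp)] at hcnt
    exact ⟨hiq, h1, by omega⟩
  · rintro ⟨hiq, h1, hcnt⟩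
    refine ⟨h1, q, hiq, fun j _ => by rw [hσ]; exact Fin.le_last _, ?_⟩
    rw [hins hiq, Finset.card_insert_of_notMem (by simp)]
    omega

lemma quad1_eq (q : Fin (n+1)) (σ : Equiv.Perm (Fin (n+1))) (i : Fin (n+1))
    (hi : (i : ℕ) < (q : ℕ)) :
    quad1 (Pq q σ) ⟨(i : ℕ), hi⟩
      = (Finset.univ.filter fun j => i < j ∧ j < q ∧ σ i < σ j).card := by
  unfold quad1
  symm
  apply Finset.card_bij (fun (j : Fin (n+1))
      (hj : j ∈ Finset.univ.filter fun j => i < j ∧ j < q ∧ σ i < σ j) =>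
    (⟨(j : ℕ), (Finset.mem_filter.mp hj).2.2.1⟩ : Fin (q : ℕ)))
  · intro a ha
    simp only [Finset.mem_filter, Finset.mem_univ, true_and] at ha ⊢
    obtain ⟨h1, h2, h3⟩ := ha
    refine ⟨h1, ?_⟩
    unfold Pq
    rw [patt_lt_iff]
    rw [castLE_mk_eq q i hi, castLE_mk_eq q a h2]
    exact h3
  · intro a _ b _ hab
    have hv := congrArg Fin.val hab
    exact Fin.ext hv
  · intro b hb
    simp only [Finset.mem_filter, Finset.mem_univ, true_and] at hb
    obtain ⟨h1, h2⟩ := hb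
    have hmem : Fin.castLE q.isLt.le b ∈
        Finset.univ.filter fun j => i < j ∧ j < q ∧ σ i < σ j := by
      simp only [Finset.mem_filter, Finset.mem_univ, true_and]
      refine ⟨h1, b.isLt, ?_⟩
      unfold Pq at h2
      rw [patt_lt_iff, castLE_mk_eq q i hi] at h2
      exact h2
    exact ⟨Fin.castLE q.isLt.le b, hmem, Fin.ext rfl⟩

lemma quad2_eq (q : Fin (n+1)) (σ : Equiv.Perm (Fin (n+1))) (i : Fin (n+1))
    (hi : (i : ℕ) < (q : ℕ)) :
    quad2 (Pq q σ) ⟨(i : ℕ), hi⟩ = 0 ↔ ∀ j, j < i → σ j < σ i := by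
  unfold quad2
  rw [Finset.card_eq_zero, Finset.filter_eq_empty_iff]
  constructor
  · intro h j hj
    have hj' : (j : ℕ) < (q : ℕ) := lt_trans hj hi
    have h2 := h (Finset.mem_univ (⟨(j : ℕ), hj'⟩ : Fin (q : ℕ)))
    rw [not_and] at h2
    have h3 := h2 hj
    unfold Pq at h3
    rw [patt_lt_iff, castLE_mk_eq q i hi, castLE_mk_eq q j hj'] at h3
    rcases lt_or_eq_of_le (not_lt.mp h3) with h4 | h4
    · exact h4
    · exact absurd (σ.injective h4) (ne_of_lt hj)
  · intro h j' _
    rintro ⟨hlt, hp⟩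
    unfold Pq at hp
    rw [patt_lt_iff, castLE_mk_eq q i hi] at hp
    exact absurd hp (not_lt.mpr (le_of_lt (h (Fin.castLE q.isLt.le j') hlt)))

lemma kle_char {k : ℕ} (hk : 2 ≤ k) {q : Fin (n+1)} {σ : Equiv.Perm (Fin (n+1))}
    (hσ : σ q = Fin.last n) (i : Fin (n+1)) :
    kleMatch k σ i ↔ ∃ hi : (i : ℕ) < (q : ℕ),
      k - 1 ≤ quad1 (Pq q σ) ⟨(i : ℕ), hi⟩ ∧ quad2 (Pq q σ) ⟨(i : ℕ), hi⟩ = 0 := by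
  rw [kle_basic hk hσ]
  constructor
  · rintro ⟨h1, h2, h3⟩
    exact ⟨h1, by rw [quad1_eq q σ i h1]; exact h3, (quad2_eq q σ i h1).mpr h2⟩
  · rintro ⟨hi, h1, h2⟩
    exact ⟨hi, (quad2_eq q σ i hi).mp h2, by rw [← quad1_eq q σ i hi]; exact h1⟩

lemma mmpKle_eq {k : ℕ} (hk : 2 ≤ k) {q : Fin (n+1)} {σ : Equiv.Perm (Fin (n+1))}
    (hσ : σ q = Fin.last n) :
    mmpKle k σ = mmpKE (k - 1) (Pq q σ) := by
  unfold mmpKle mmpKE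
  apply Finset.card_bij (fun (i : Fin (n+1))
      (hi : i ∈ Finset.univ.filter fun i => kleMatch k σ i) => (⟨(i : ℕ),
    ((kle_char hk hσ i).mp (Finset.mem_filter.mp hi).2).choose⟩ : Fin (q : ℕ)))
  · intro a ha
    have h := (kle_char hk hσ a).mp (Finset.mem_filter.mp ha).2
    simp only [Finset.mem_filter, Finset.mem_univ, true_and]
    exact h.choose_spec
  · intro a _ b _ hab
    have hv := congrArg Fin.val hab
    exact Fin.ext hv
  · intro b hb
    simp only [Finset.mem_filter, Finset.mem_univ, true_and] at hb
    have hmem : Fin.castLE q.isLt.le b ∈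
        Finset.univ.filter fun i => kleMatch k σ i := by
      simp only [Finset.mem_filter, Finset.mem_univ, true_and]
      apply (kle_char hk hσ _).mpr
      refine ⟨b.isLt, ?_⟩
      have hb' : (⟨((Fin.castLE q.isLt.le b : Fin (n+1)) : ℕ), b.isLt⟩ : Fin (q : ℕ)) = b :=
        Fin.ext rfl
      rw [hb']
      exact hb
    exact ⟨Fin.castLE q.isLt.le b, hmem, Fin.ext rfl⟩

lemma inner_sum (k : ℕ) (hk : 2 ≤ k) (q : Fin (n+1)) :
    ∑ σ ∈ Finset.univ.filter (fun σ : Equiv.Perm (Fin (n+1)) => σ q = Fin.last n),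
      (Polynomial.X : Polynomial ℤ) ^ mmpKle k σ
    = (Nat.choose n (q : ℕ) * Nat.factorial (n - (q : ℕ))) • RKE (k - 1) (q : ℕ) := by
  set S := Finset.univ.filter (fun σ : Equiv.Perm (Fin (n+1)) => σ q = Fin.last n) with hS
  have e1 : ∑ σ ∈ S, (Polynomial.X : Polynomial ℤ) ^ mmpKle k σ
      = ∑ σ ∈ S, (Polynomial.X : Polynomial ℤ) ^ mmpKE (k - 1) (Pq q σ) :=
    Finset.sum_congr rfl (fun σ hσ => by
      rw [mmpKle_eq hk (Finset.mem_filter.mp hσ).2])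
  have e2 : ∑ σ ∈ S, (Polynomial.X : Polynomial ℤ) ^ mmpKE (k - 1) (Pq q σ)
      = ∑ τ : Equiv.Perm (Fin (q : ℕ)), ∑ σ ∈ S.filter (fun σ => Pq q σ = τ),
          (Polynomial.X : Polynomial ℤ) ^ mmpKE (k - 1) (Pq q σ) :=
    (Finset.sum_fiberwise S (Pq q) _).symm
  have e3 : ∀ τ : Equiv.Perm (Fin (q : ℕ)),
      ∑ σ ∈ S.filter (fun σ => Pq q σ = τ),
          (Polynomial.X : Polynomial ℤ) ^ mmpKE (k - 1) (Pq q σ)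
        = (Nat.choose n (q : ℕ) * Nat.factorial (n - (q : ℕ))) •
            (Polynomial.X : Polynomial ℤ) ^ mmpKE (k - 1) τ := by
    intro τ
    have e4 : ∑ σ ∈ S.filter (fun σ => Pq q σ = τ),
          (Polynomial.X : Polynomial ℤ) ^ mmpKE (k - 1) (Pq q σ)
        = ∑ σ ∈ S.filter (fun σ => Pq q σ = τ),
          (Polynomial.X : Polynomial ℤ) ^ mmpKE (k - 1) τ :=
      Finset.sum_congr rfl (fun σ hσ => by rw [(Finset.mem_filter.mp hσ).2])
    rw [e4, Finset.sum_const, hS, Finset.filter_filter, card_fiber q τ]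
  rw [e1, e2, Finset.sum_congr rfl (fun τ _ => e3 τ), ← Finset.smul_sum]
  rfl

end Main
end MMPAux

theorem stmt_9 (k : ℕ) (hk : 2 ≤ k) (n : ℕ) :
    RKle k (n + 1) =
      ∑ i ∈ Finset.Icc 1 (n + 1),
        ((Nat.factorial (n + 1 - i) * Nat.choose n (i - 1) : ℕ) : Polynomial ℤ) *
          RKE (k - 1) (i - 1) := by
  have hmain : RKle k (n + 1) = ∑ q : Fin (n+1),
      ((Nat.choose n (q : ℕ) * Nat.factorial (n - (q : ℕ))) • RKE (k - 1) (q : ℕ)) := by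
    rw [RKle]
    rw [← Finset.sum_fiberwise Finset.univ
      (fun σ : Equiv.Perm (Fin (n+1)) => σ⁻¹ (Fin.last n))
      (fun σ => (Polynomial.X : Polynomial ℤ) ^ mmpKle k σ)]
    apply Finset.sum_congr rfl
    intro q _
    have hfilter : Finset.univ.filter
        (fun σ : Equiv.Perm (Fin (n+1)) => σ⁻¹ (Fin.last n) = q)
        = Finset.univ.filter (fun σ : Equiv.Perm (Fin (n+1)) => σ q = Fin.last n) := by
      apply Finset.filter_congr
      intro σ _
      constructor
      · intro h; rw [← h, ← Equiv.Perm.mul_apply, mul_inv_cancel, Equiv.Perm.one_apply]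
      · intro h; rw [← h, ← Equiv.Perm.mul_apply, inv_mul_cancel, Equiv.Perm.one_apply]
    rw [hfilter]
    exact MMPAux.inner_sum k hk q
  rw [hmain]
  apply Finset.sum_bij' (fun (q : Fin (n+1)) (_ : q ∈ Finset.univ) => (q : ℕ) + 1)
    (fun (i : ℕ) (hi : i ∈ Finset.Icc 1 (n+1)) =>
      (⟨i - 1, by simp only [Finset.mem_Icc] at hi; omega⟩ : Fin (n+1)))
  case hi =>
    intro a _
    simp only [Finset.mem_Icc]
    have := a.isLt
    omega
  case hj =>
    intro a _
    exact Finset.mem_univ _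
  case left_neg =>
    intro a _
    apply Fin.ext
    show (a : ℕ) + 1 - 1 = (a : ℕ)
    omega
  case right_neg =>
    intro a ha
    simp only [Finset.mem_Icc] at ha
    show a - 1 + 1 = a
    omega
  case h =>
    intro a _
    have h1 : (a : ℕ) + 1 - 1 = (a : ℕ) := by omega
    have h2 : n + 1 - ((a : ℕ) + 1) = n - (a : ℕ) := by omega
    rw [h1, h2, nsmul_eq_mul, Nat.cast_mul, Nat.cast_mul, mul_comm (Nat.choose n (a:ℕ) : Polynomial ℤ)]
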